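/- arXiv:1504.05705 — 2 statements merged into one kernel-verified Lean document; each statement's English description precedes it below -/
import Mathlib

section
/- Let g : 𝕋² × ℝ⁴ → ℝ satisfy (g1) (nonincreasing in q₁ and q₃, nondecreasing in q₂ and q₄), (g3) (continuous, C¹ in q), and (g5) (there exist c₁,c₂,c₃,c₄ > 0 with ∇_q g(x,q)·q − g(x,q) ≥ c₁|∇_q g(x,q)|² − c₂ and |∇_q g(x,q)| ≤ c₃|q| + c₄ for all (x,q)), and assume sup_{x∈𝕋²} |g(x,0,0,0,0)| < ∞. Then there exists λ > 0 such that for all x ∈ 𝕋² and all q = (q₁,q₂,q₃,q₄) ∈ ℝ⁴: g(x, q₁, q₂, q₃, q₄) ≤ λ · [ 1 + (q₁⁻)² + (q₂⁺)² + (q₃⁻)² + (q₄⁺)² ]. -/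
open Finset

noncomputable section

abbrev Torus : Type := AddCircle (1:ℝ) × AddCircle (1:ℝ)

/-- The grid step `h = 1/N_h`. -/
def gridh (N : ℕ) : ℝ := 1 / N

/-- The grid point `x_{i,j} = (ih, jh)` on the torus. -/
def gridPt (N : ℕ) (i j : ZMod N) : Torus :=
  (((i.val : ℝ) * gridh N : ℝ), ((j.val : ℝ) * gridh N : ℝ))

/-- Forward difference in the first direction. -/
def D1 {N : ℕ} (v : ZMod N → ZMod N → ℝ) (i j : ZMod N) : ℝ :=
  (v (i + 1) j - v i j) / gridh N

/-- Forward difference in the second direction. -/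
def D2 {N : ℕ} (v : ZMod N → ZMod N → ℝ) (i j : ZMod N) : ℝ :=
  (v i (j + 1) - v i j) / gridh N

/-- `[∇_h v]_{i,j} ∈ ℝ⁴`. -/
def nablah {N : ℕ} (v : ZMod N → ZMod N → ℝ) (i j : ZMod N) : Fin 4 → ℝ :=
  ![D1 v i j, D1 v (i - 1) j, D2 v i j, D2 v i (j - 1)]

/-- The five-point discrete Laplacian. -/
def laph {N : ℕ} (v : ZMod N → ZMod N → ℝ) (i j : ZMod N) : ℝ :=
  -(4 * v i j - v (i + 1) j - v (i - 1) j - v i (j + 1) - v i (j - 1)) / (gridh N) ^ 2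

/-- Scalar product on ℝ⁴. -/
def dot4 (p q : Fin 4 → ℝ) : ℝ := p 0 * q 0 + p 1 * q 1 + p 2 * q 2 + p 3 * q 3

/-- Euclidean norm on ℝ⁴. -/
def norm4 (p : Fin 4 → ℝ) : ℝ := Real.sqrt (dot4 p p)

/-- The discrete transport operator `𝒯_{i,j}(u,m)`. -/
def Transp {N : ℕ} (gq : Torus → (Fin 4 → ℝ) → (Fin 4 → ℝ))
    (u m : ZMod N → ZMod N → ℝ) (i j : ZMod N) : ℝ :=
  (1 / gridh N) *
    ((m i j * gq (gridPt N i j) (nablah u i j) 0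
        - m (i - 1) j * gq (gridPt N (i - 1) j) (nablah u (i - 1) j) 0
        + m (i + 1) j * gq (gridPt N (i + 1) j) (nablah u (i + 1) j) 1
        - m i j * gq (gridPt N i j) (nablah u i j) 1)
      + (m i j * gq (gridPt N i j) (nablah u i j) 2
        - m i (j - 1) * gq (gridPt N i (j - 1)) (nablah u i (j - 1)) 2
        + m i (j + 1) * gq (gridPt N i (j + 1)) (nablah u i (j + 1)) 3
        - m i j * gq (gridPt N i j) (nablah u i j) 3))

/-- Membership in the set `𝒦_h` of discrete probability densities. -/
def inKh {N : ℕ} [NeZero N] (m : ZMod N → ZMod N → ℝ) : Prop :=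
  (∀ i j, 0 ≤ m i j) ∧ (gridh N) ^ 2 * ∑ i, ∑ j, m i j = 1

/-- (g1): monotonicity of the numerical Hamiltonian. -/
def Hg1 (g : Torus → (Fin 4 → ℝ) → ℝ) : Prop :=
  ∀ x (q : Fin 4 → ℝ) (s t : ℝ), s ≤ t →
    g x (Function.update q 0 t) ≤ g x (Function.update q 0 s) ∧
    g x (Function.update q 2 t) ≤ g x (Function.update q 2 s) ∧
    g x (Function.update q 1 s) ≤ g x (Function.update q 1 t) ∧
    g x (Function.update q 3 s) ≤ g x (Function.update q 3 t)

/-- (g2): consistency with the Hamiltonian `H`. -/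
def Hg2 (g : Torus → (Fin 4 → ℝ) → ℝ) (H : Torus → ℝ × ℝ → ℝ) : Prop :=
  ∀ x (q1 q2 : ℝ), g x ![q1, q1, q2, q2] = H x (q1, q2)

/-- (g3): regularity; `g` is continuous and C¹ w.r.t. `q`, with `q`-gradient `gq`. -/
def Hg3 (g : Torus → (Fin 4 → ℝ) → ℝ) (gq : Torus → (Fin 4 → ℝ) → (Fin 4 → ℝ)) : Prop :=
  Continuous (fun p : Torus × (Fin 4 → ℝ) => g p.1 p.2) ∧
  (∀ x, ContDiff ℝ 1 (g x)) ∧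
  (∀ x (q : Fin 4 → ℝ) (i : Fin 4),
      HasDerivAt (fun t => g x (Function.update q i t)) (gq x q i) (q i))

/-- (g4): convexity of `q ↦ g(x,q)`. -/
def Hg4 (g : Torus → (Fin 4 → ℝ) → ℝ) : Prop :=
  ∀ x, ConvexOn ℝ Set.univ (g x)

/-- (g5): the growth conditions. -/
def Hg5 (g : Torus → (Fin 4 → ℝ) → ℝ) (gq : Torus → (Fin 4 → ℝ) → (Fin 4 → ℝ)) : Prop :=
  ∃ c1 c2 c3 c4 : ℝ, 0 < c1 ∧ 0 < c2 ∧ 0 < c3 ∧ 0 < c4 ∧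
    ∀ x q, c1 * (norm4 (gq x q)) ^ 2 - c2 ≤ dot4 (gq x q) q - g x q ∧
      norm4 (gq x q) ≤ c3 * norm4 q + c4

/-- The discrete Bellman equations. -/
def BellmanEq {N : ℕ} (g : Torus → (Fin 4 → ℝ) → ℝ) (ν Δt : ℝ) (F : ℝ → ℝ)
    (u m : ℕ → ZMod N → ZMod N → ℝ) (NT : ℕ) : Prop :=
  ∀ k < NT, ∀ i j, (u (k + 1) i j - u k i j) / Δt - ν * laph (u (k + 1)) i j
    + g (gridPt N i j) (nablah (u (k + 1)) i j) = F (m k i j)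

/-- The discrete Fokker–Planck equations. -/
def FPEq {N : ℕ} (gq : Torus → (Fin 4 → ℝ) → (Fin 4 → ℝ)) (ν Δt : ℝ)
    (u m : ℕ → ZMod N → ZMod N → ℝ) (NT : ℕ) : Prop :=
  ∀ k < NT, ∀ i j, (m (k + 1) i j - m k i j) / Δt + ν * laph (m k) i j
    + Transp gq (u (k + 1)) (m k) i j = 0



lemma dot4_self_nonneg (p : Fin 4 → ℝ) : 0 ≤ dot4 p p := by
  unfold dot4; nlinarith [sq_nonneg (p 0), sq_nonneg (p 1), sq_nonneg (p 2), sq_nonneg (p 3)]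

lemma norm4_nonneg (p : Fin 4 → ℝ) : 0 ≤ norm4 p := Real.sqrt_nonneg _

lemma sq_norm4 (p : Fin 4 → ℝ) : (norm4 p) ^ 2 = dot4 p p :=
  Real.sq_sqrt (dot4_self_nonneg p)

lemma abs_coord_le_norm4 (p : Fin 4 → ℝ) (i : Fin 4) : |p i| ≤ norm4 p := by
  have h : (p i) ^ 2 ≤ dot4 p p := by
    unfold dot4
    fin_cases i <;>
      simp only [show ((⟨2, by norm_num⟩ : Fin 4)) = 2 from rfl,
        show ((⟨3, by norm_num⟩ : Fin 4)) = 3 from rfl] <;> norm_num <;>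
      nlinarith [sq_nonneg (p 0), sq_nonneg (p 1), sq_nonneg (p 2), sq_nonneg (p 3)]
  calc |p i| = Real.sqrt ((p i) ^ 2) := by rw [Real.sqrt_sq_eq_abs]
    _ ≤ norm4 p := Real.sqrt_le_sqrt h

lemma norm4_mono (p q : Fin 4 → ℝ) (h : ∀ i, |p i| ≤ |q i|) : norm4 p ≤ norm4 q := by
  apply Real.sqrt_le_sqrt
  have h0 := h 0; have h1 := h 1; have h2 := h 2; have h3 := h 3
  have e : ∀ a b : ℝ, |a| ≤ |b| → a ^ 2 ≤ b ^ 2 := fun a b hab => by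
    nlinarith [abs_nonneg a, sq_abs a, sq_abs b]
  unfold dot4
  nlinarith [e _ _ h0, e _ _ h1, e _ _ h2, e _ _ h3]

lemma mvt_step (g : (Fin 4 → ℝ) → ℝ) (gq : (Fin 4 → ℝ) → (Fin 4 → ℝ))
    (hder : ∀ (q : Fin 4 → ℝ) (i : Fin 4),
      HasDerivAt (fun t => g (Function.update q i t)) (gq q i) (q i))
    (r : Fin 4 → ℝ) (i : Fin 4) (a C : ℝ)
    (hC : ∀ t ∈ Set.uIcc 0 a, |gq (Function.update r i t) i| ≤ C) :
    g (Function.update r i a) ≤ g (Function.update r i 0) + C * |a| := by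
  set φ : ℝ → ℝ := fun t => g (Function.update r i t) with hφ
  have key : ‖φ a - φ 0‖ ≤ C * ‖a - 0‖ := by
    apply Convex.norm_image_sub_le_of_norm_hasDerivWithin_le
      (f' := fun t => gq (Function.update r i t) i)
      (fun t _ => ?_) (fun t ht => by simpa using hC t ht) (convex_uIcc 0 a)
      (Set.left_mem_uIcc) (Set.right_mem_uIcc)
    have h := hder (Function.update r i t) i
    have e : (fun s => g (Function.update (Function.update r i t) i s)) = φ := by
      funext s; rw [Function.update_idem]
    rw [e, Function.update_self] at h
    exact h.hasDerivWithinAt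
  have := abs_sub_le_iff.mp (by simpa using key)
  simp only [hφ] at this ⊢
  linarith [this.1]

lemma mono_step (g : (Fin 4 → ℝ) → ℝ)
    (hg1 : ∀ (q : Fin 4 → ℝ) (s t : ℝ), s ≤ t →
      g (Function.update q 0 t) ≤ g (Function.update q 0 s) ∧
      g (Function.update q 2 t) ≤ g (Function.update q 2 s) ∧
      g (Function.update q 1 s) ≤ g (Function.update q 1 t) ∧
      g (Function.update q 3 s) ≤ g (Function.update q 3 t))
    (q : Fin 4 → ℝ) :
    g q ≤ g ![min (q 0) 0, max (q 1) 0, min (q 2) 0, max (q 3) 0] := by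
  set r0 : Fin 4 → ℝ := Function.update q 0 (min (q 0) 0) with hr0
  set r1 : Fin 4 → ℝ := Function.update r0 1 (max (q 1) 0) with hr1
  set r2 : Fin 4 → ℝ := Function.update r1 2 (min (q 2) 0) with hr2
  set r3 : Fin 4 → ℝ := Function.update r2 3 (max (q 3) 0) with hr3
  have s0 : g q ≤ g r0 := by
    have h := (hg1 q (min (q 0) 0) (q 0) (min_le_left _ _)).1
    rwa [Function.update_eq_self] at h
  have s1 : g r0 ≤ g r1 := by
    have h := (hg1 r0 (r0 1) (max (q 1) 0) (by
      rw [hr0, Function.update_of_ne (by decide)]; exact le_max_left _ _)).2.2.1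
    rwa [Function.update_eq_self] at h
  have s2 : g r1 ≤ g r2 := by
    have h := (hg1 r1 (min (q 2) 0) (r1 2) (by
      rw [hr1, Function.update_of_ne (by decide), hr0,
        Function.update_of_ne (by decide)]; exact min_le_left _ _)).2.1
    rwa [Function.update_eq_self] at h
  have s3 : g r2 ≤ g r3 := by
    have h := (hg1 r2 (r2 3) (max (q 3) 0) (by
      rw [hr2, Function.update_of_ne (by decide), hr1,
        Function.update_of_ne (by decide), hr0,
        Function.update_of_ne (by decide)]; exact le_max_left _ _)).2.2.2
    rwa [Function.update_eq_self] at h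
  have e : r3 = ![min (q 0) 0, max (q 1) 0, min (q 2) 0, max (q 3) 0] := by
    funext i
    fin_cases i <;> simp [hr3, hr2, hr1, hr0, Function.update]
  rw [e] at s3
  linarith

lemma abs_le_of_mem_uIcc0 {t a : ℝ} (h : t ∈ Set.uIcc 0 a) : |t| ≤ |a| := by
  rcases Set.mem_uIcc.mp h with ⟨h1, h2⟩ | ⟨h1, h2⟩
  · rw [abs_of_nonneg h1]; exact le_trans h2 (le_abs_self a)
  · rw [abs_of_nonpos h2]
    calc -t ≤ -a := by linarith
      _ ≤ |a| := neg_le_abs a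

lemma comp_bound {p q' : Fin 4 → ℝ} (hp : ∀ i, p i = 0 ∨ p i = q' i) (k : Fin 4) {t : ℝ}
    (ht : |t| ≤ |q' k|) : ∀ i, |Function.update p k t i| ≤ |q' i| := by
  intro i
  by_cases h : i = k
  · subst h; rw [Function.update_self]; exact ht
  · rw [Function.update_of_ne h]
    rcases hp i with h' | h' <;> simp [h']

lemma hp_update {p q' : Fin 4 → ℝ} (hp : ∀ i, p i = 0 ∨ p i = q' i) (k : Fin 4) :
    ∀ i, Function.update p k (q' k) i = 0 ∨ Function.update p k (q' k) i = q' i := by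
  intro i
  by_cases h : i = k
  · subst h; right; rw [Function.update_self]
  · rw [Function.update_of_ne h]; exact hp i


/-- Quadratic growth bound for the numerical Hamiltonian.
Under (g1), (g3), (g5), if `sup_x |g(x,0)| < ∞`, then there is `λ > 0` such that
`g(x,q) ≤ λ (1 + (q₁⁻)² + (q₂⁺)² + (q₃⁻)² + (q₄⁺)²)` for all `x, q`. -/
theorem numerical_Hamiltonian_growth_bound
    (g : Torus → (Fin 4 → ℝ) → ℝ) (gq : Torus → (Fin 4 → ℝ) → (Fin 4 → ℝ))
    (hg1 : Hg1 g) (hg3 : Hg3 g gq) (hg5 : Hg5 g gq)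
    (hbdd : BddAbove (Set.range fun x : Torus => |g x (fun _ => 0)|)) :
    ∃ lam : ℝ, 0 < lam ∧ ∀ (x : Torus) (q : Fin 4 → ℝ),
      g x q ≤ lam * (1 + (max (-(q 0)) 0) ^ 2 + (max (q 1) 0) ^ 2
        + (max (-(q 2)) 0) ^ 2 + (max (q 3) 0) ^ 2) := by
  obtain ⟨c1, c2, c3, c4, hc1, hc2, hc3, hc4, hg5'⟩ := hg5
  obtain ⟨B, hB⟩ := hbdd
  have hBx : ∀ x : Torus, |g x (fun _ => 0)| ≤ B := fun x => hB ⟨x, rfl⟩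
  have hB0 : 0 ≤ B := le_trans (abs_nonneg _) (hBx (0, 0))
  refine ⟨B + 4 * c3 + 2 * c4 + 1, by nlinarith, ?_⟩
  intro x q
  set q' : Fin 4 → ℝ := ![min (q 0) 0, max (q 1) 0, min (q 2) 0, max (q 3) 0] with hq'
  have hmono : g x q ≤ g x q' := mono_step (g x) (fun q s t h => hg1 x q s t h) q
  set n : ℝ := norm4 q' with hn
  have hn0 : 0 ≤ n := norm4_nonneg q'
  have hC0 : 0 ≤ c3 * n + c4 := by nlinarith
  have hpt : ∀ r : Fin 4 → ℝ, (∀ i, |r i| ≤ |q' i|) → ∀ i, |gq x r i| ≤ c3 * n + c4 := by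
    intro r hr i
    calc |gq x r i| ≤ norm4 (gq x r) := abs_coord_le_norm4 _ i
      _ ≤ c3 * norm4 r + c4 := (hg5' x r).2
      _ ≤ c3 * n + c4 := by
          have h := norm4_mono r q' hr
          nlinarith
  have st : ∀ (p : Fin 4 → ℝ) (k : Fin 4), (∀ i, p i = 0 ∨ p i = q' i) → p k = 0 →
      g x (Function.update p k (q' k)) ≤ g x p + (c3 * n + c4) * n := by
    intro p k hp hk
    have h := mvt_step (g x) (gq x) (hg3.2.2 x) p k (q' k) (c3 * n + c4)
      (fun t ht => hpt _ (comp_bound hp k (abs_le_of_mem_uIcc0 ht)) k)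
    have e : Function.update p k 0 = p := by rw [← hk, Function.update_eq_self]
    rw [e] at h
    have hqk : |q' k| ≤ n := abs_coord_le_norm4 q' k
    nlinarith [abs_nonneg (q' k)]
  set p0 : Fin 4 → ℝ := fun _ => 0 with hp0
  set p1 : Fin 4 → ℝ := Function.update p0 0 (q' 0) with hp1
  set p2 : Fin 4 → ℝ := Function.update p1 1 (q' 1) with hp2
  set p3 : Fin 4 → ℝ := Function.update p2 2 (q' 2) with hp3
  set p4 : Fin 4 → ℝ := Function.update p3 3 (q' 3) with hp4
  have hpp0 : ∀ i, p0 i = 0 ∨ p0 i = q' i := fun i => Or.inl rfl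
  have hpp1 : ∀ i, p1 i = 0 ∨ p1 i = q' i := hp_update hpp0 0
  have hpp2 : ∀ i, p2 i = 0 ∨ p2 i = q' i := hp_update hpp1 1
  have hpp3 : ∀ i, p3 i = 0 ∨ p3 i = q' i := hp_update hpp2 2
  have st1 : g x p1 ≤ g x p0 + (c3 * n + c4) * n := st p0 0 hpp0 rfl
  have st2 : g x p2 ≤ g x p1 + (c3 * n + c4) * n := st p1 1 hpp1
    (by rw [hp1, Function.update_of_ne (by decide)])
  have st3 : g x p3 ≤ g x p2 + (c3 * n + c4) * n := st p2 2 hpp2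
    (by rw [hp2, Function.update_of_ne (by decide), hp1, Function.update_of_ne (by decide)])
  have st4 : g x p4 ≤ g x p3 + (c3 * n + c4) * n := st p3 3 hpp3
    (by rw [hp3, Function.update_of_ne (by decide), hp2, Function.update_of_ne (by decide),
      hp1, Function.update_of_ne (by decide)])
  have hp4eq : p4 = q' := by
    funext i
    fin_cases i <;> simp [hp4, hp3, hp2, hp1, hp0, Function.update]
  have hg0 : g x p0 ≤ B := le_trans (le_abs_self _) (hBx x)
  have hgq' : g x q' ≤ B + 4 * ((c3 * n + c4) * n) := by
    rw [← hp4eq]; linarith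
  have hdq : dot4 q' q' = (max (-(q 0)) 0) ^ 2 + (max (q 1) 0) ^ 2
      + (max (-(q 2)) 0) ^ 2 + (max (q 3) 0) ^ 2 := by
    have e : ∀ a : ℝ, min a 0 * min a 0 = (max (-a) 0) ^ 2 := fun a => by
      rcases le_total a 0 with h | h
      · rw [min_eq_left h, max_eq_left (by linarith)]; ring
      · rw [min_eq_right h, max_eq_right (by linarith)]; ring
    have e0 : q' 0 = min (q 0) 0 := rfl
    have e1 : q' 1 = max (q 1) 0 := rfl
    have e2 : q' 2 = min (q 2) 0 := rfl
    have e3 : q' 3 = max (q 3) 0 := rfl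
    rw [dot4, e0, e1, e2, e3, e (q 0), e (q 2)]; ring
  have hnsq : n ^ 2 = (max (-(q 0)) 0) ^ 2 + (max (q 1) 0) ^ 2
      + (max (-(q 2)) 0) ^ 2 + (max (q 3) 0) ^ 2 := by
    rw [hn, sq_norm4, hdq]
  nlinarith [sq_nonneg (n - 1), mul_nonneg hB0 (sq_nonneg n),
    mul_nonneg hc4.le (sq_nonneg (n - 1)), mul_nonneg hc3.le (sq_nonneg n)]


end
end

section
/- Let ν > 0, Δt > 0, N_T a positive integer, and let (u^n)_{0≤n≤N_T} be grid functions on 𝕋²_h satisfying the discrete heat equation (u^{n+1}_{i,j} − u^n_{i,j})/Δt − ν(Δ_h u^{n+1})_{i,j} = f^n_{i,j} for all i,j and 0 ≤ n < N_T, where (f^n)_{0≤n<N_T} are given grid functions. Then for every bounded, nondecreasing C¹ function ψ : ℝ → ℝ: ν · h²Δt Σ_{n=0}^{N_T−1} Σ_{i,j} (D_h u^{n+1})_{i,j} · (D_h ψ(u^{n+1}))_{i,j} ≤ ‖ψ‖_∞ · ( ‖f‖_{L¹(Q_{h,Δt})} + ‖u⁰‖_{L¹(𝕋²_h)} + ‖u^{N_T}‖_{L¹(𝕋²_h)}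 ), where ψ(u^{n+1}) denotes the grid function (ψ(u^{n+1}_{i,j}))_{i,j} and ‖ψ‖_∞ = sup_{r∈ℝ} |ψ(r)|. -/
open Finset

noncomputable section

lemma sum_shift {N : ℕ} [NeZero N] (g : ZMod N → ℝ) : ∑ i, g (i + 1) = ∑ i, g i :=
  Fintype.sum_equiv (Equiv.addRight 1) _ _ (fun _ => rfl)

lemma oneD {N : ℕ} [NeZero N] (a b : ZMod N → ℝ) :
    ∑ i, (a (i + 1) - a i) * (b (i + 1) - b i)
      = ∑ i, (2 * a i - a (i + 1) - a (i - 1)) * b i := by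
  have h1 : ∑ i, (a (i + 1) - a i) * b (i + 1) = ∑ i, (a i - a (i - 1)) * b i := by
    have := sum_shift (fun i => (a i - a (i - 1)) * b i)
    simpa [add_sub_cancel_right] using this
  have h2 : ∀ i : ZMod N, (a (i + 1) - a i) * (b (i + 1) - b i)
      = (a (i + 1) - a i) * b (i + 1) - (a (i + 1) - a i) * b i := fun i => by ring
  simp_rw [h2]
  rw [Finset.sum_sub_distrib, h1, ← Finset.sum_sub_distrib]
  exact Finset.sum_congr rfl fun i _ => by ring

lemma green {N : ℕ} [NeZero N] (v w : ZMod N → ZMod N → ℝ) :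
    ∑ i, ∑ j, (D1 v i j * D1 w i j + D2 v i j * D2 w i j)
      = ∑ i, ∑ j, (-(laph v i j)) * w i j := by
  have key : ∑ i, ∑ j, ((v (i + 1) j - v i j) * (w (i + 1) j - w i j)
        + (v i (j + 1) - v i j) * (w i (j + 1) - w i j))
      = ∑ i, ∑ j, (4 * v i j - v (i + 1) j - v (i - 1) j - v i (j + 1) - v i (j - 1)) * w i j := by
    have e1 : ∀ j : ZMod N, ∑ i, (v (i + 1) j - v i j) * (w (i + 1) j - w i j)
        = ∑ i, (2 * v i j - v (i + 1) j - v (i - 1) j) * w i j :=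
      fun j => oneD (fun i => v i j) (fun i => w i j)
    have e2 : ∀ i : ZMod N, ∑ j, (v i (j + 1) - v i j) * (w i (j + 1) - w i j)
        = ∑ j, (2 * v i j - v i (j + 1) - v i (j - 1)) * w i j := fun i => oneD (v i) (w i)
    calc ∑ i, ∑ j, ((v (i + 1) j - v i j) * (w (i + 1) j - w i j)
            + (v i (j + 1) - v i j) * (w i (j + 1) - w i j))
        = (∑ i, ∑ j, (v (i + 1) j - v i j) * (w (i + 1) j - w i j))
            + ∑ i, ∑ j, (v i (j + 1) - v i j) * (w i (j + 1) - w i j) := by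
          rw [← Finset.sum_add_distrib]
          exact Finset.sum_congr rfl fun i _ => Finset.sum_add_distrib
      _ = (∑ j, ∑ i, (2 * v i j - v (i + 1) j - v (i - 1) j) * w i j)
            + ∑ i, ∑ j, (2 * v i j - v i (j + 1) - v i (j - 1)) * w i j := by
          rw [Finset.sum_comm]
          exact congrArg₂ (· + ·) (Finset.sum_congr rfl fun j _ => e1 j)
            (Finset.sum_congr rfl fun i _ => e2 i)
      _ = (∑ i, ∑ j, (2 * v i j - v (i + 1) j - v (i - 1) j) * w i j)
            + ∑ i, ∑ j, (2 * v i j - v i (j + 1) - v i (j - 1)) * w i j := by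
          rw [Finset.sum_comm]
      _ = ∑ i, ∑ j, (4 * v i j - v (i + 1) j - v (i - 1) j - v i (j + 1) - v i (j - 1)) * w i j := by
          rw [← Finset.sum_add_distrib]
          refine Finset.sum_congr rfl fun i _ => ?_
          rw [← Finset.sum_add_distrib]
          exact Finset.sum_congr rfl fun j _ => by ring
  have l1 : ∀ i j : ZMod N, D1 v i j * D1 w i j + D2 v i j * D2 w i j
      = ((v (i + 1) j - v i j) * (w (i + 1) j - w i j)
        + (v i (j + 1) - v i j) * (w i (j + 1) - w i j)) / (gridh N) ^ 2 := by
    intro i j; simp only [D1, D2]; ring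
  have l2 : ∀ i j : ZMod N, (-(laph v i j)) * w i j
      = ((4 * v i j - v (i + 1) j - v (i - 1) j - v i (j + 1) - v i (j - 1)) * w i j)
          / (gridh N) ^ 2 := by
    intro i j; simp only [laph]; ring
  simp_rw [l1, l2, ← Finset.sum_div, key]

/-- The primitive of `ψ`. -/
def Psi (ψ : ℝ → ℝ) (r : ℝ) : ℝ := ∫ t in (0:ℝ)..r, ψ t

lemma Psi_sub_le (ψ : ℝ → ℝ) (hc : Continuous ψ) (hm : Monotone ψ) (a b : ℝ) :
    Psi ψ b - Psi ψ a ≤ ψ b * (b - a) := by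
  have hint : ∀ x y : ℝ, IntervalIntegrable ψ MeasureTheory.volume x y :=
    fun x y => hc.intervalIntegrable x y
  have hdiff : Psi ψ b - Psi ψ a = ∫ t in a..b, ψ t := by
    rw [Psi, Psi, ← intervalIntegral.integral_add_adjacent_intervals (hint 0 a) (hint a b)]
    ring
  rw [hdiff]
  rcases le_total a b with hab | hab
  · have h1 : ∫ t in a..b, ψ t ≤ ∫ t in a..b, (fun _ : ℝ => ψ b) t :=
      intervalIntegral.integral_mono_on hab (hint a b) intervalIntegrable_const
        (fun t ht => hm ht.2)
    have h2 : ∫ t in a..b, (fun _ : ℝ => ψ b) t = (b - a) * ψ b := by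
      simp [intervalIntegral.integral_const, smul_eq_mul]
    rw [h2] at h1; linarith
  · rw [intervalIntegral.integral_symm]
    have h1 : ∫ t in b..a, (fun _ : ℝ => ψ b) t ≤ ∫ t in b..a, ψ t :=
      intervalIntegral.integral_mono_on hab intervalIntegrable_const (hint b a)
        (fun t ht => hm ht.1)
    have h2 : ∫ t in b..a, (fun _ : ℝ => ψ b) t = (a - b) * ψ b := by
      simp [intervalIntegral.integral_const, smul_eq_mul]
    rw [h2] at h1; linarith

lemma abs_Psi_le (ψ : ℝ → ℝ) (M : ℝ) (hM : ∀ r, |ψ r| ≤ M) (r : ℝ) :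
    |Psi ψ r| ≤ M * |r| := by
  have := intervalIntegral.norm_integral_le_of_norm_le_const
    (C := M) (f := ψ) (a := (0:ℝ)) (b := r) (fun x _ => hM x)
  simpa [Psi, Real.norm_eq_abs] using this

/-- Energy estimate for the discrete heat equation with `L¹` data.
If `(u^n)` solves the discrete heat equation with data `(f^n)`, then for every
bounded nondecreasing C¹ function `ψ`, the discrete energy
`ν h²Δt Σ_n Σ_{i,j} (D_h u^{n+1})·(D_h ψ(u^{n+1}))` is bounded by
`‖ψ‖_∞ (‖f‖_{L¹} + ‖u⁰‖_{L¹} + ‖u^{N_T}‖_{L¹})`. -/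
theorem discrete_heat_energy_estimate (N NT : ℕ) [NeZero N] (hNT : 0 < NT)
    (ν Δt : ℝ) (hν : 0 < ν) (hΔt : 0 < Δt)
    (u f : ℕ → ZMod N → ZMod N → ℝ)
    (heq : ∀ n < NT, ∀ i j,
      (u (n + 1) i j - u n i j) / Δt - ν * laph (u (n + 1)) i j = f n i j)
    (ψ : ℝ → ℝ) (hψmono : Monotone ψ) (hψC1 : ContDiff ℝ 1 ψ)
    (hψbdd : BddAbove (Set.range fun r => |ψ r|)) :
    ν * ((gridh N) ^ 2 * Δt * ∑ n ∈ Finset.range NT, ∑ i, ∑ j,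
        (D1 (u (n + 1)) i j * D1 (fun a b => ψ (u (n + 1) a b)) i j
          + D2 (u (n + 1)) i j * D2 (fun a b => ψ (u (n + 1) a b)) i j))
      ≤ (⨆ r : ℝ, |ψ r|) *
          (Δt * ∑ n ∈ Finset.range NT, (gridh N) ^ 2 * ∑ i, ∑ j, |f n i j|
            + (gridh N) ^ 2 * ∑ i, ∑ j, |u 0 i j|
            + (gridh N) ^ 2 * ∑ i, ∑ j, |u NT i j|) := by
  set M := ⨆ r : ℝ, |ψ r| with hMdef
  have hM : ∀ r, |ψ r| ≤ M := fun r => le_ciSup hψbdd r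
  have hM0 : 0 ≤ M := le_trans (abs_nonneg _) (hM 0)
  set h2 : ℝ := (gridh N) ^ 2 with hh2
  have h20 : 0 ≤ h2 := sq_nonneg _
  -- the pointwise summand after using the equation
  set X : ℕ → ZMod N → ZMod N → ℝ := fun n i j =>
    Δt * (f n i j * ψ (u (n + 1) i j)) - (u (n + 1) i j - u n i j) * ψ (u (n + 1) i j) with hX
  set S : ℕ → ℝ := fun n => ∑ i, ∑ j,
      (D1 (u (n + 1)) i j * D1 (fun a b => ψ (u (n + 1) a b)) i j
        + D2 (u (n + 1)) i j * D2 (fun a b => ψ (u (n + 1) a b)) i j) with hS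
  have step : ∀ n ∈ Finset.range NT, Δt * (ν * S n) = ∑ i, ∑ j, X n i j := by
    intro n hn
    rw [Finset.mem_range] at hn
    rw [hS]
    simp only
    rw [green (u (n + 1)) (fun a b => ψ (u (n + 1) a b)), Finset.mul_sum, Finset.mul_sum]
    refine Finset.sum_congr rfl fun i _ => ?_
    rw [Finset.mul_sum, Finset.mul_sum]
    refine Finset.sum_congr rfl fun j _ => ?_
    have he := heq n hn i j
    have hΔt' : Δt ≠ 0 := hΔt.ne'
    simp only [hX]
    field_simp at he
    linear_combination ψ (u (n + 1) i j) * he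
  have lhs_eq : ν * (h2 * Δt * ∑ n ∈ Finset.range NT, S n)
      = h2 * ∑ i, ∑ j, ∑ n ∈ Finset.range NT, X n i j := by
    have A1 : ν * (h2 * Δt * ∑ n ∈ Finset.range NT, S n)
        = h2 * ∑ n ∈ Finset.range NT, Δt * (ν * S n) := by
      simp_rw [show ∀ n : ℕ, Δt * (ν * S n) = (Δt * ν) * S n from fun n => by ring,
        ← Finset.mul_sum]
      ring
    rw [A1, Finset.sum_congr rfl step]
    congr 1
    rw [Finset.sum_comm]
    exact Finset.sum_congr rfl fun i _ => Finset.sum_comm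
  have point : ∀ i j : ZMod N, ∑ n ∈ Finset.range NT, X n i j
      ≤ M * (Δt * ∑ n ∈ Finset.range NT, |f n i j| + |u 0 i j| + |u NT i j|) := by
    intro i j
    have tele : ∑ n ∈ Finset.range NT, (Psi ψ (u (n + 1) i j) - Psi ψ (u n i j))
        = Psi ψ (u NT i j) - Psi ψ (u 0 i j) :=
      Finset.sum_range_sub (fun n => Psi ψ (u n i j)) NT
    have hb : ∀ n ∈ Finset.range NT, X n i j
        ≤ Δt * (M * |f n i j|) - (Psi ψ (u (n + 1) i j) - Psi ψ (u n i j)) := by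
      intro n _
      have h1 : f n i j * ψ (u (n + 1) i j) ≤ M * |f n i j| := by
        calc f n i j * ψ (u (n + 1) i j) ≤ |f n i j * ψ (u (n + 1) i j)| := le_abs_self _
          _ = |f n i j| * |ψ (u (n + 1) i j)| := abs_mul _ _
          _ ≤ |f n i j| * M := mul_le_mul_of_nonneg_left (hM _) (abs_nonneg _)
          _ = M * |f n i j| := mul_comm _ _
      have h1' := mul_le_mul_of_nonneg_left h1 hΔt.le
      have h2' := Psi_sub_le ψ hψC1.continuous hψmono (u n i j) (u (n + 1) i j)
      simp only [hX]
      nlinarith [h2']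
    calc ∑ n ∈ Finset.range NT, X n i j
        ≤ ∑ n ∈ Finset.range NT,
            (Δt * (M * |f n i j|) - (Psi ψ (u (n + 1) i j) - Psi ψ (u n i j))) :=
          Finset.sum_le_sum hb
      _ = M * (Δt * ∑ n ∈ Finset.range NT, |f n i j|)
            + (Psi ψ (u 0 i j) - Psi ψ (u NT i j)) := by
          rw [Finset.sum_sub_distrib, tele]
          rw [show ∑ n ∈ Finset.range NT, Δt * (M * |f n i j|)
              = M * (Δt * ∑ n ∈ Finset.range NT, |f n i j|) from by
            rw [Finset.mul_sum, Finset.mul_sum]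
            exact Finset.sum_congr rfl fun n _ => by ring]
          ring
      _ ≤ M * (Δt * ∑ n ∈ Finset.range NT, |f n i j| + |u 0 i j| + |u NT i j|) := by
          have a1 := abs_Psi_le ψ M hM (u 0 i j)
          have a2 := abs_Psi_le ψ M hM (u NT i j)
          rw [abs_le] at a1 a2
          rw [mul_add, mul_add]
          linarith [a1.2, a2.1]
  have swap : ∑ n ∈ Finset.range NT, ∑ i : ZMod N, ∑ j : ZMod N, |f n i j|
      = ∑ i : ZMod N, ∑ j : ZMod N, ∑ n ∈ Finset.range NT, |f n i j| := by
    rw [Finset.sum_comm]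
    exact Finset.sum_congr rfl fun i _ => Finset.sum_comm
  have rhs_eq : M * (Δt * ∑ n ∈ Finset.range NT, h2 * ∑ i, ∑ j, |f n i j|
        + h2 * ∑ i, ∑ j, |u 0 i j| + h2 * ∑ i, ∑ j, |u NT i j|)
      = h2 * ∑ i, ∑ j,
          (M * (Δt * ∑ n ∈ Finset.range NT, |f n i j| + |u 0 i j| + |u NT i j|)) := by
    have expand : ∑ i : ZMod N, ∑ j : ZMod N,
        (M * (Δt * ∑ n ∈ Finset.range NT, |f n i j| + |u 0 i j| + |u NT i j|))
        = (M * Δt) * (∑ i : ZMod N, ∑ j : ZMod N, ∑ n ∈ Finset.range NT, |f n i j|)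
          + M * (∑ i : ZMod N, ∑ j : ZMod N, |u 0 i j|)
          + M * (∑ i : ZMod N, ∑ j : ZMod N, |u NT i j|) := by
      simp_rw [show ∀ (i j : ZMod N),
          M * (Δt * ∑ n ∈ Finset.range NT, |f n i j| + |u 0 i j| + |u NT i j|)
          = (M * Δt) * (∑ n ∈ Finset.range NT, |f n i j|) + M * |u 0 i j| + M * |u NT i j|
          from fun i j => by ring, Finset.sum_add_distrib, ← Finset.mul_sum]
    rw [expand, ← swap, ← Finset.mul_sum]
    ring
  calc ν * (h2 * Δt * ∑ n ∈ Finset.range NT, S n)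
      = h2 * ∑ i, ∑ j, ∑ n ∈ Finset.range NT, X n i j := lhs_eq
    _ ≤ h2 * ∑ i, ∑ j,
          (M * (Δt * ∑ n ∈ Finset.range NT, |f n i j| + |u 0 i j| + |u NT i j|)) := by
        refine mul_le_mul_of_nonneg_left ?_ h20
        exact Finset.sum_le_sum fun i _ => Finset.sum_le_sum fun j _ => point i j
    _ = M * (Δt * ∑ n ∈ Finset.range NT, h2 * ∑ i, ∑ j, |f n i j|
          + h2 * ∑ i, ∑ j, |u 0 i j| + h2 * ∑ i, ∑ j, |u NT i j|) := rhs_eq.symm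

end
end
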